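/- (Variance bound.) Let M and M̂ be two finite MDPs sharing the same state space S and action space A. Let γ, γ_Bw be discount factors with 0 ≤ γ ≤ γ_Bw < 1. Let π* be an optimal policy for M at discount γ and π̂ an optimal policy for M̂ at discount γ. Let ε̂ = ||V_{M,γ}^{π*} − V_{M,γ}^{π̂}||_∞ (both value vectors computed in M with discount γ), let δ̂ = δ_M(π*, π̂) be the discordant action variation computed with the transitions of M, and let κ = κ_γ be the value-function variation of M at discount γ. Then ||V_{M,γ_Bw}^{π*} − V_{M,γ_Bw}^{π̂}||_∞ ≤ ε̂ · (1 − γ)/(1 − γ_Bw) + (δ̂/2) · κ · (γ_Bw − γ) / ((1 − γ_Bw)(1 − γ_Bw(1 − δ̂/2))). -/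

import Mathlib

open Finset

noncomputable section

/-- Transition matrix of a policy `π` in an MDP with transition function `P`. -/
def polMatrix {S A : Type*} [Fintype S] [DecidableEq S] (P : S → A → S → ℝ) (π : S → A) :
    Matrix S S ℝ :=
  fun s s' => P s (π s) s'

/-- Reward vector of a policy `π` for a reward function `R`. -/
def polReward {S A : Type*} (R : S → A → ℝ) (π : S → A) : S → ℝ :=
  fun s => R s (π s)

/-- Value vector of a policy: `V_γ^π = Σ_{k=0}^∞ γ^k P_π^k R_π`. -/
def valueVec {S A : Type*} [Fintype S] [DecidableEq S] (P : S → A → S → ℝ) (R : S → A → ℝ)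
    (γ : ℝ) (π : S → A) : S → ℝ :=
  ∑' k : ℕ, γ ^ k • ((polMatrix P π ^ k).mulVec (polReward R π))

/-- A policy `π⋆` is optimal for discount `γ` if it dominates every policy in every state. -/
def IsOptimalPolicy {S A : Type*} [Fintype S] [DecidableEq S] (P : S → A → S → ℝ)
    (R : S → A → ℝ) (γ : ℝ) (πstar : S → A) : Prop :=
  ∀ (π : S → A) (s : S), valueVec P R γ π s ≤ valueVec P R γ πstar s

/-- Discordant action variation of two policies:
`max_{s : π s ≠ π' s} ‖P(·|s, π s) − P(·|s, π' s)‖₁`, taken to be `0` when `π = π'`. -/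
def discordantVar {S A : Type*} [Fintype S] [DecidableEq S] [DecidableEq A]
    (P : S → A → S → ℝ) (π π' : S → A) : ℝ :=
  Finset.fold max 0 (fun s => ∑ s', |P s (π s) s' - P s (π' s) s'|)
    (Finset.univ.filter fun s => π s ≠ π' s)

/-- Value-function variation of a policy: `max_{s,s'} |V(s) − V(s')|`. -/
def valueVariation {S : Type*} [Fintype S] [Nonempty S] (V : S → ℝ) : ℝ :=
  (Finset.univ : Finset (S × S)).sup' Finset.univ_nonempty (fun pr => |V pr.1 - V pr.2|)

/-- Sup norm of a vector on a nonempty finite set. -/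
def supNorm {S : Type*} [Fintype S] [Nonempty S] (x : S → ℝ) : ℝ :=
  Finset.univ.sup' Finset.univ_nonempty (fun s => |x s|)


namespace VarBoundAux

set_option linter.unusedSectionVars false
set_option linter.unusedVariables false

variable {S : Type*} [Fintype S] [DecidableEq S] [Nonempty S]

lemma dot_sub_dot_le (p q f g : S → ℝ) (d c : ℝ)
    (hp : ∀ u, 0 ≤ p u) (hq : ∀ u, 0 ≤ q u)
    (hpd : ∑ u, p u = d) (hqd : ∑ u, q u = d) (hc : 0 ≤ c)
    (h : ∀ u w, f u - g w ≤ c) :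
    ∑ u, p u * f u - ∑ w, q w * g w ≤ d * c := by
  have hd : 0 ≤ d := hpd ▸ Finset.sum_nonneg fun u _ => hp u
  rcases eq_or_lt_of_le hd with hd0 | hd0
  · have hp0 : ∀ u ∈ Finset.univ, p u = 0 :=
      (Finset.sum_eq_zero_iff_of_nonneg (fun u _ => hp u)).mp (by rw [hpd, ← hd0])
    have hq0 : ∀ u ∈ Finset.univ, q u = 0 :=
      (Finset.sum_eq_zero_iff_of_nonneg (fun u _ => hq u)).mp (by rw [hqd, ← hd0])
    have e1 : ∑ u, p u * f u = 0 :=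
      Finset.sum_eq_zero fun u hu => by rw [hp0 u hu, zero_mul]
    have e2 : ∑ w, q w * g w = 0 :=
      Finset.sum_eq_zero fun w hw => by rw [hq0 w hw, zero_mul]
    rw [e1, e2, ← hd0]; ring_nf; rfl
  · have key : ∑ u, ∑ w, p u * q w * (f u - g w) ≤ ∑ u, ∑ w, p u * q w * c := by
      refine Finset.sum_le_sum fun u _ => Finset.sum_le_sum fun w _ => ?_
      exact mul_le_mul_of_nonneg_left (h u w) (mul_nonneg (hp u) (hq w))
    have hL : ∑ u, ∑ w, p u * q w * (f u - g w)
        = d * (∑ u, p u * f u) - d * (∑ w, q w * g w) := by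
      have e1 : ∀ u, ∑ w, p u * q w * (f u - g w)
          = p u * f u * d - p u * (∑ w, q w * g w) := by
        intro u
        have : ∀ w, p u * q w * (f u - g w)
            = p u * f u * q w - p u * (q w * g w) := fun w => by ring
        rw [Finset.sum_congr rfl fun w _ => this w, Finset.sum_sub_distrib,
          ← Finset.mul_sum, ← Finset.mul_sum, hqd]
      rw [Finset.sum_congr rfl fun u _ => e1 u, Finset.sum_sub_distrib,
        ← Finset.sum_mul, ← Finset.sum_mul, hpd]
      ring
    have hR : ∑ u, ∑ w, p u * q w * c = d * d * c := by
      have e1 : ∀ u, ∑ w, p u * q w * c = p u * (d * c) := by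
        intro u
        have : ∀ w, p u * q w * c = p u * c * q w := fun w => by ring
        rw [Finset.sum_congr rfl fun w _ => this w, ← Finset.mul_sum, hqd]; ring
      rw [Finset.sum_congr rfl fun u _ => e1 u, ← Finset.sum_mul, hpd]; ring
    rw [hL, hR] at key
    nlinarith [key]

lemma stoch_pow (M : Matrix S S ℝ) (h0 : ∀ s s', 0 ≤ M s s')
    (h1 : ∀ s, ∑ s', M s s' = 1) (k : ℕ) :
    (∀ s s', 0 ≤ (M ^ k) s s') ∧ (∀ s, ∑ s', (M ^ k) s s' = 1) := by
  induction k with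
  | zero =>
    constructor
    · intro s s'
      simp only [pow_zero, Matrix.one_apply]
      split <;> norm_num
    · intro s
      simp [Matrix.one_apply]
  | succ k ih =>
    obtain ⟨ih0, ih1⟩ := ih
    constructor
    · intro s s'
      rw [pow_succ, Matrix.mul_apply]
      exact Finset.sum_nonneg fun u _ => mul_nonneg (ih0 s u) (h0 u s')
    · intro s
      simp only [pow_succ, Matrix.mul_apply]
      rw [Finset.sum_comm]
      have : ∀ u, ∑ s', (M ^ k) s u * M u s' = (M ^ k) s u := by
        intro u; rw [← Finset.mul_sum, h1 u, mul_one]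
      rw [Finset.sum_congr rfl fun u _ => this u, ih1 s]

lemma le_supNorm (x : S → ℝ) (s : S) : |x s| ≤ supNorm x :=
  Finset.le_sup' (f := fun s => |x s|) (Finset.mem_univ s)

lemma supNorm_le {x : S → ℝ} {c : ℝ} (h : ∀ s, |x s| ≤ c) : supNorm x ≤ c :=
  Finset.sup'_le _ _ fun s _ => h s

lemma supNorm_nonneg (x : S → ℝ) : 0 ≤ supNorm x :=
  le_trans (abs_nonneg _) (le_supNorm x (Classical.arbitrary S))

lemma sub_le_valueVariation (V : S → ℝ) (s t : S) : V s - V t ≤ valueVariation V :=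
  le_trans (le_abs_self _)
    (Finset.le_sup' (f := fun pr : S × S => |V pr.1 - V pr.2|) (Finset.mem_univ (s, t)))

lemma valueVariation_nonneg (V : S → ℝ) : 0 ≤ valueVariation V := by
  have := sub_le_valueVariation V (Classical.arbitrary S) (Classical.arbitrary S)
  linarith

lemma mulVec_apply (M : Matrix S S ℝ) (v : S → ℝ) (s : S) :
    M.mulVec v s = ∑ u, M s u * v u := by
  simp [Matrix.mulVec, dotProduct]

lemma abs_mulVec_le (M : Matrix S S ℝ) (h0 : ∀ s s', 0 ≤ M s s')
    (h1 : ∀ s, ∑ s', M s s' = 1) (v : S → ℝ) (s : S) :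
    |(M.mulVec v) s| ≤ supNorm v := by
  rw [mulVec_apply]
  calc |∑ u, M s u * v u| ≤ ∑ u, |M s u * v u| := Finset.abs_sum_le_sum_abs _ _
    _ ≤ ∑ u, M s u * supNorm v := by
        refine Finset.sum_le_sum fun u _ => ?_
        rw [abs_mul, abs_of_nonneg (h0 s u)]
        exact mul_le_mul_of_nonneg_left (le_supNorm v u) (h0 s u)
    _ = supNorm v := by rw [← Finset.sum_mul, h1 s, one_mul]

lemma summable_series (M : Matrix S S ℝ) (h0 : ∀ s s', 0 ≤ M s s')
    (h1 : ∀ s, ∑ s', M s s' = 1) (v : S → ℝ) {β : ℝ} (hβ0 : 0 ≤ β) (hβ1 : β < 1) :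
    Summable (fun k : ℕ => β ^ k • ((M ^ k).mulVec v)) := by
  rw [Pi.summable]
  intro s
  refine Summable.of_norm_bounded
    ((summable_geometric_of_lt_one hβ0 hβ1).mul_right (supNorm v)) fun k => ?_
  have hb := abs_mulVec_le (M ^ k) (stoch_pow M h0 h1 k).1 (stoch_pow M h0 h1 k).2 v s
  have : ‖(β ^ k • ((M ^ k).mulVec v)) s‖ = β ^ k * |((M ^ k).mulVec v) s| := by
    rw [Pi.smul_apply, smul_eq_mul, Real.norm_eq_abs, abs_mul, abs_pow, abs_of_nonneg hβ0]
  rw [this]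
  exact mul_le_mul_of_nonneg_left hb (pow_nonneg hβ0 k)

lemma tsum_fixed (M : Matrix S S ℝ) (h0 : ∀ s s', 0 ≤ M s s')
    (h1 : ∀ s, ∑ s', M s s' = 1) (v : S → ℝ) {β : ℝ} (hβ0 : 0 ≤ β) (hβ1 : β < 1) :
    (∑' k : ℕ, β ^ k • ((M ^ k).mulVec v))
      = v + β • M.mulVec (∑' k : ℕ, β ^ k • ((M ^ k).mulVec v)) := by
  have hs := summable_series M h0 h1 v hβ0 hβ1
  conv_lhs => rw [Summable.tsum_eq_zero_add hs]
  congr 1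
  · simp [Matrix.one_mulVec]
  · have hstep : ∀ k : ℕ, β ^ (k + 1) • ((M ^ (k + 1)).mulVec v)
        = β • M.mulVec (β ^ k • ((M ^ k).mulVec v)) := by
      intro k
      have h1' : (M ^ (k + 1)).mulVec v = M.mulVec ((M ^ k).mulVec v) := by
        rw [Matrix.mulVec_mulVec, ← pow_succ']
      rw [h1', Matrix.mulVec_smul, smul_smul, ← pow_succ']
    rw [tsum_congr hstep]
    let L : (S → ℝ) →L[ℝ] (S → ℝ) :=
      LinearMap.toContinuousLinearMap (β • Matrix.mulVecLin M)
    have hL : ∀ w, L w = β • M.mulVec w := fun w => rfl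
    calc (∑' k : ℕ, β • M.mulVec (β ^ k • ((M ^ k).mulVec v)))
        = ∑' k : ℕ, L (β ^ k • ((M ^ k).mulVec v)) := tsum_congr fun k => (hL _).symm
      _ = L (∑' k : ℕ, β ^ k • ((M ^ k).mulVec v)) := (L.map_tsum hs).symm
      _ = β • M.mulVec (∑' k : ℕ, β ^ k • ((M ^ k).mulVec v)) := hL _

lemma fixed_unique (M : Matrix S S ℝ) (h0 : ∀ s s', 0 ≤ M s s')
    (h1 : ∀ s, ∑ s', M s s' = 1) {β : ℝ} (hβ0 : 0 ≤ β) (hβ1 : β < 1)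
    {c u w : S → ℝ} (hu : u = c + β • M.mulVec u) (hw : w = c + β • M.mulVec w) :
    u = w := by
  have hz : (fun s => u s - w s) = fun s => β * (M.mulVec (fun t => u t - w t)) s := by
    funext s
    have hsub : M.mulVec (fun t => u t - w t) s = M.mulVec u s - M.mulVec w s := by
      have : (fun t => u t - w t) = u - w := rfl
      rw [this, Matrix.mulVec_sub]; rfl
    rw [hsub]
    have hus : u s = c s + β * M.mulVec u s := by nth_rewrite 1 [hu]; rfl
    have hws : w s = c s + β * M.mulVec w s := by nth_rewrite 1 [hw]; rfl
    rw [hus, hws]; ring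
  have hn : supNorm (fun s => u s - w s) ≤ β * supNorm (fun s => u s - w s) := by
    refine supNorm_le fun s => ?_
    rw [congrFun hz s, abs_mul, abs_of_nonneg hβ0]
    exact mul_le_mul_of_nonneg_left (abs_mulVec_le M h0 h1 _ s) hβ0
  have h0n : supNorm (fun s => u s - w s) ≤ 0 := by
    nlinarith [supNorm_nonneg (fun s => u s - w s)]
  funext s
  have h2 : |u s - w s| ≤ 0 := le_trans (le_supNorm (fun s => u s - w s) s) h0n
  have h3 : |u s - w s| = 0 := le_antisymm h2 (abs_nonneg _)
  linarith [sub_eq_zero.mp (abs_eq_zero.mp h3), abs_eq_zero.mp h3]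

lemma fixed_norm_le (M : Matrix S S ℝ) (h0 : ∀ s s', 0 ≤ M s s')
    (h1 : ∀ s, ∑ s', M s s' = 1) {β : ℝ} (hβ0 : 0 ≤ β) (hβ1 : β < 1)
    {c u : S → ℝ} (hu : u = c + β • M.mulVec u) :
    supNorm u ≤ supNorm c / (1 - β) := by
  have hn : supNorm u ≤ supNorm c + β * supNorm u := by
    refine supNorm_le fun s => ?_
    have hus : u s = c s + β * M.mulVec u s := by nth_rewrite 1 [hu]; rfl
    rw [hus]
    have h2 : |c s + β * M.mulVec u s| ≤ |c s| + β * |M.mulVec u s| := by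
      calc |c s + β * M.mulVec u s| ≤ |c s| + |β * M.mulVec u s| := abs_add_le _ _
        _ = |c s| + β * |M.mulVec u s| := by rw [abs_mul, abs_of_nonneg hβ0]
    refine le_trans h2 (add_le_add (le_supNorm c s) ?_)
    exact mul_le_mul_of_nonneg_left (abs_mulVec_le M h0 h1 u s) hβ0
  rw [le_div_iff₀ (by linarith : (0:ℝ) < 1 - β)]
  nlinarith

variable {A : Type*} [DecidableEq A]

lemma discordantVar_nonneg (P : S → A → S → ℝ) (π π' : S → A) :
    0 ≤ discordantVar P π π' :=
  (Finset.le_fold_max 0).mpr (Or.inl le_rfl)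

lemma le_discordantVar (P : S → A → S → ℝ) (π π' : S → A) (s : S) (h : π s ≠ π' s) :
    ∑ s', |P s (π s) s' - P s (π' s) s'| ≤ discordantVar P π π' :=
  (Finset.le_fold_max _).mpr (Or.inr ⟨s, Finset.mem_filter.mpr ⟨Finset.mem_univ s, h⟩, le_rfl⟩)

lemma key_step_one (β x κ cXY nD : ℝ) (p q V f g : S → ℝ)
    (hβ0 : 0 ≤ β) (hx0 : 0 ≤ x) (hκ0 : 0 ≤ κ) (hc0 : 0 ≤ cXY) (hnD0 : 0 ≤ nD)
    (hp0 : ∀ z, 0 ≤ p z) (hq0 : ∀ z, 0 ≤ q z)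
    (hp1 : ∑ z, p z = 1) (hq1 : ∑ z, q z = 1)
    (hd : (∑ z, |p z - q z|) / 2 ≤ x)
    (hV : ∀ u w, V u - V w ≤ κ)
    (hfg : ∀ u w, f u - g w ≤ cXY)
    (habs : ∀ z, f z - g z ≤ nD)
    (hnDc : β * nD ≤ β * cXY) :
    (∑ z, p z * V z + β * ∑ z, p z * f z) - (∑ z, q z * V z + β * ∑ z, q z * g z)
      ≤ β * nD + x * (κ + β * cXY - β * nD) := by
  set a := fun z => min (p z) (q z) with hadef
  set r := fun z => p z - a z with hrdef
  set t := fun z => q z - a z with htdef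
  set d := (∑ z, |p z - q z|) / 2 with hddef
  have ha0 : ∀ z, 0 ≤ a z := fun z => le_min (hp0 z) (hq0 z)
  have hr0 : ∀ z, 0 ≤ r z := fun z => sub_nonneg.mpr (min_le_left _ _)
  have ht0 : ∀ z, 0 ≤ t z := fun z => sub_nonneg.mpr (min_le_right _ _)
  have hre : ∀ z, r z = ((p z - q z) + |p z - q z|) / 2 := by
    intro z
    rcases le_total (p z) (q z) with h | h
    · simp only [hrdef, hadef]
      rw [min_eq_left h, abs_of_nonpos (by linarith : p z - q z ≤ 0)]
      ring
    · simp only [hrdef, hadef]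
      rw [min_eq_right h, abs_of_nonneg (by linarith : (0:ℝ) ≤ p z - q z)]
      ring
  have hte : ∀ z, t z = ((q z - p z) + |p z - q z|) / 2 := by
    intro z
    rcases le_total (p z) (q z) with h | h
    · simp only [htdef, hadef]
      rw [min_eq_left h, abs_of_nonpos (by linarith : p z - q z ≤ 0)]
      ring
    · simp only [htdef, hadef]
      rw [min_eq_right h, abs_of_nonneg (by linarith : (0:ℝ) ≤ p z - q z)]
      ring
  have hrsum : ∑ z, r z = d := by
    rw [Finset.sum_congr rfl fun z _ => hre z, ← Finset.sum_div, Finset.sum_add_distrib,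
      Finset.sum_sub_distrib, hp1, hq1, hddef]
    ring
  have htsum : ∑ z, t z = d := by
    rw [Finset.sum_congr rfl fun z _ => hte z, ← Finset.sum_div, Finset.sum_add_distrib,
      Finset.sum_sub_distrib, hp1, hq1, hddef]
    ring
  have hasum : ∑ z, a z = 1 - d := by
    have e : ∀ z, a z = p z - r z := fun z => by simp only [hrdef]; ring
    rw [Finset.sum_congr rfl fun z _ => e z, Finset.sum_sub_distrib, hp1, hrsum]
  have hd0 : 0 ≤ d := by rw [← hrsum]; exact Finset.sum_nonneg fun z _ => hr0 z
  have hsp : ∀ h : S → ℝ, ∑ z, p z * h z = ∑ z, a z * h z + ∑ z, r z * h z := by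
    intro h
    rw [← Finset.sum_add_distrib]
    refine Finset.sum_congr rfl fun z _ => ?_
    simp only [hrdef]; ring
  have hsq : ∀ h : S → ℝ, ∑ z, q z * h z = ∑ z, a z * h z + ∑ z, t z * h z := by
    intro h
    rw [← Finset.sum_add_distrib]
    refine Finset.sum_congr rfl fun z _ => ?_
    simp only [htdef]; ring
  have bV : ∑ z, r z * V z - ∑ z, t z * V z ≤ d * κ :=
    dot_sub_dot_le r t V V d κ hr0 ht0 hrsum htsum hκ0 hV
  have bF : ∑ z, r z * f z - ∑ z, t z * g z ≤ d * cXY :=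
    dot_sub_dot_le r t f g d cXY hr0 ht0 hrsum htsum hc0 hfg
  have bA : ∑ z, a z * f z - ∑ z, a z * g z ≤ (1 - d) * nD := by
    rw [← Finset.sum_sub_distrib]
    have e : ∀ z, a z * f z - a z * g z = a z * (f z - g z) := fun z => by ring
    rw [Finset.sum_congr rfl fun z _ => e z]
    calc ∑ z, a z * (f z - g z) ≤ ∑ z, a z * nD :=
          Finset.sum_le_sum fun z _ => mul_le_mul_of_nonneg_left (habs z) (ha0 z)
      _ = (1 - d) * nD := by rw [← Finset.sum_mul, hasum]
  rw [hsp V, hsp f, hsq V, hsq g]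
  have hmul := mul_le_mul_of_nonneg_left (add_le_add bA bF) hβ0
  have hK0 : 0 ≤ κ + β * cXY - β * nD := by linarith
  have hdK := mul_le_mul_of_nonneg_right hd hK0
  nlinarith [bV, hmul, hdK]

lemma key_step_abs (β x κ cXY nD : ℝ) (p q V f g : S → ℝ)
    (hβ0 : 0 ≤ β) (hx0 : 0 ≤ x) (hκ0 : 0 ≤ κ) (hc0 : 0 ≤ cXY) (hnD0 : 0 ≤ nD)
    (hp0 : ∀ z, 0 ≤ p z) (hq0 : ∀ z, 0 ≤ q z)
    (hp1 : ∑ z, p z = 1) (hq1 : ∑ z, q z = 1)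
    (hd : (∑ z, |p z - q z|) / 2 ≤ x)
    (hV : ∀ u w, V u - V w ≤ κ)
    (hfg : ∀ u w, f u - g w ≤ cXY)
    (hgf : ∀ u w, g u - f w ≤ cXY)
    (habs : ∀ z, |f z - g z| ≤ nD)
    (hnDc : β * nD ≤ β * cXY) :
    |(∑ z, p z * V z + β * ∑ z, p z * f z) - (∑ z, q z * V z + β * ∑ z, q z * g z)|
      ≤ β * nD + x * (κ + β * cXY - β * nD) := by
  rw [abs_sub_le_iff]
  constructor
  · exact key_step_one β x κ cXY nD p q V f g hβ0 hx0 hκ0 hc0 hnD0 hp0 hq0 hp1 hq1 hd hV hfg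
      (fun z => le_trans (le_abs_self _) (habs z)) hnDc
  · have hd' : (∑ z, |q z - p z|) / 2 ≤ x := by
      have e : ∀ z, |q z - p z| = |p z - q z| := fun z => abs_sub_comm _ _
      rw [Finset.sum_congr rfl fun z _ => e z]
      exact hd
    have hV' : ∀ u w, V u - V w ≤ κ := hV
    refine key_step_one β x κ cXY nD q p V g f hβ0 hx0 hκ0 hc0 hnD0 hq0 hp0 hq1 hp1 hd' hV' hgf
      (fun z => ?_) hnDc
    calc g z - f z ≤ |g z - f z| := le_abs_self _
      _ = |f z - g z| := abs_sub_comm _ _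
      _ ≤ nD := habs z

end VarBoundAux

set_option maxHeartbeats 1000000 in
/-- **Variance bound.**
`M = (P,R)` and `M̂ = (P̂,R̂)` share state and action spaces. With `π⋆` optimal for `M` at
discount `γ`, `π̂` optimal for `M̂` at discount `γ`, `ε̂ = ‖V_{M,γ}^{π⋆} − V_{M,γ}^{π̂}‖_∞`,
`δ̂ = δ_M(π⋆, π̂)`, and `κ` the value-function variation of `M` at discount `γ`,
`‖V_{M,γBw}^{π⋆} − V_{M,γBw}^{π̂}‖_∞
  ≤ ε̂ (1−γ)/(1−γBw) + (δ̂/2) κ (γBw−γ) / ((1−γBw)(1−γBw(1−δ̂/2)))`. -/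
theorem variance_bound
    {S A : Type*} [Fintype S] [DecidableEq S] [Nonempty S] [Fintype A] [Nonempty A] [DecidableEq A]
    (P Phat : S → A → S → ℝ) (R Rhat : S → A → ℝ) (Rmax Rmaxhat : ℝ)
    (hP0 : ∀ s a s', 0 ≤ P s a s') (hP1 : ∀ s a, ∑ s', P s a s' = 1)
    (hPhat0 : ∀ s a s', 0 ≤ Phat s a s') (hPhat1 : ∀ s a, ∑ s', Phat s a s' = 1)
    (hRmax : 0 ≤ Rmax) (hR0 : ∀ s a, 0 ≤ R s a) (hR1 : ∀ s a, R s a ≤ Rmax)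
    (hRmaxhat : 0 ≤ Rmaxhat) (hRhat0 : ∀ s a, 0 ≤ Rhat s a) (hRhat1 : ∀ s a, Rhat s a ≤ Rmaxhat)
    (γ γBw : ℝ) (hγ0 : 0 ≤ γ) (hγγBw : γ ≤ γBw) (hγBw1 : γBw < 1)
    (πstar πhat : S → A)
    (hπstar : IsOptimalPolicy P R γ πstar) (hπhat : IsOptimalPolicy Phat Rhat γ πhat) :
    supNorm (fun s => valueVec P R γBw πstar s - valueVec P R γBw πhat s) ≤
      supNorm (fun s => valueVec P R γ πstar s - valueVec P R γ πhat s) * (1 - γ) / (1 - γBw)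
      + (discordantVar P πstar πhat / 2) * valueVariation (valueVec P R γ πstar) * (γBw - γ) /
          ((1 - γBw) * (1 - γBw * (1 - discordantVar P πstar πhat / 2))) := by
  open VarBoundAux in
  have hγB0 : 0 ≤ γBw := le_trans hγ0 hγγBw
  have hγ1 : γ < 1 := lt_of_le_of_lt hγγBw hγBw1
  have hd1 : (0:ℝ) < 1 - γBw := by linarith
  have h10 : ∀ s s', 0 ≤ (polMatrix P πstar) s s' := fun s s' => hP0 s _ s'
  have h11 : ∀ s, ∑ s', (polMatrix P πstar) s s' = 1 := fun s => hP1 s _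
  have h20 : ∀ s s', 0 ≤ (polMatrix P πhat) s s' := fun s s' => hP0 s _ s'
  have h21 : ∀ s, ∑ s', (polMatrix P πhat) s s' = 1 := fun s => hP1 s _
  have bell : ∀ (π : S → A) (β : ℝ), 0 ≤ β → β < 1 →
      valueVec P R β π = polReward R π + β • (polMatrix P π).mulVec (valueVec P R β π) := by
    intro π β hb0 hb1
    exact VarBoundAux.tsum_fixed (polMatrix P π) (fun s s' => hP0 s _ s') (fun s => hP1 s _)
      (polReward R π) hb0 hb1
  set V1 := valueVec P R γ πstar with hV1def
  set V2 := valueVec P R γ πhat with hV2def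
  set V1' := valueVec P R γBw πstar with hV1'def
  set V2' := valueVec P R γBw πhat with hV2'def
  set κ := valueVariation V1 with hκdef
  set x := discordantVar P πstar πhat / 2 with hxdef
  set ε := supNorm (fun s => V1 s - V2 s) with hεdef
  have hκ0 : 0 ≤ κ := by rw [hκdef]; exact VarBoundAux.valueVariation_nonneg V1
  have hκpair : ∀ u w, V1 u - V1 w ≤ κ := fun u w => by
    rw [hκdef]; exact VarBoundAux.sub_le_valueVariation V1 u w
  have hx0 : 0 ≤ x := by
    rw [hxdef]
    exact div_nonneg (VarBoundAux.discordantVar_nonneg P πstar πhat) (by norm_num)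
  have hε0 : 0 ≤ ε := by rw [hεdef]; exact VarBoundAux.supNorm_nonneg _
  have hB1 : V1 = polReward R πstar + γ • (polMatrix P πstar).mulVec V1 := by
    rw [hV1def]; exact bell πstar γ hγ0 hγ1
  have hB2 : V2 = polReward R πhat + γ • (polMatrix P πhat).mulVec V2 := by
    rw [hV2def]; exact bell πhat γ hγ0 hγ1
  have hB1' : V1' = polReward R πstar + γBw • (polMatrix P πstar).mulVec V1' := by
    rw [hV1'def]; exact bell πstar γBw hγB0 hγBw1
  have hB2' : V2' = polReward R πhat + γBw • (polMatrix P πhat).mulVec V2' := by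
    rw [hV2'def]; exact bell πhat γBw hγB0 hγBw1
  obtain ⟨X, hX⟩ : ∃ X : S → ℝ,
      X = (polMatrix P πstar).mulVec V1 + γBw • (polMatrix P πstar).mulVec X :=
    ⟨_, VarBoundAux.tsum_fixed _ h10 h11 ((polMatrix P πstar).mulVec V1) hγB0 hγBw1⟩
  obtain ⟨Y, hY⟩ : ∃ Y : S → ℝ,
      Y = (polMatrix P πhat).mulVec V1 + γBw • (polMatrix P πhat).mulVec Y :=
    ⟨_, VarBoundAux.tsum_fixed _ h20 h21 ((polMatrix P πhat).mulVec V1) hγB0 hγBw1⟩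
  obtain ⟨Y2, hY2⟩ : ∃ Y2 : S → ℝ,
      Y2 = (polMatrix P πhat).mulVec V2 + γBw • (polMatrix P πhat).mulVec Y2 :=
    ⟨_, VarBoundAux.tsum_fixed _ h20 h21 ((polMatrix P πhat).mulVec V2) hγB0 hγBw1⟩
  -- E identities
  have hE1 : (fun s => V1' s - V1 s) = fun s => (γBw - γ) * X s := by
    have hfix1 : (fun s => V1' s - V1 s)
        = (fun s => (γBw - γ) * ((polMatrix P πstar).mulVec V1) s)
          + γBw • (polMatrix P πstar).mulVec (fun s => V1' s - V1 s) := by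
      funext s
      have e1 : (polMatrix P πstar).mulVec (fun t => V1' t - V1 t) s
          = (polMatrix P πstar).mulVec V1' s - (polMatrix P πstar).mulVec V1 s := by
        have h : (fun t => V1' t - V1 t) = V1' - V1 := rfl
        rw [h, Matrix.mulVec_sub]; rfl
      have e2 : V1' s = polReward R πstar s + γBw * ((polMatrix P πstar).mulVec V1') s :=
        congrFun hB1' s
      have e3 : V1 s = polReward R πstar s + γ * ((polMatrix P πstar).mulVec V1) s :=
        congrFun hB1 s
      show V1' s - V1 s = (γBw - γ) * ((polMatrix P πstar).mulVec V1) s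
        + γBw * ((polMatrix P πstar).mulVec (fun s => V1' s - V1 s)) s
      rw [e1]
      nth_rewrite 1 [e2]
      nth_rewrite 1 [e3]
      ring
    have hfix2 : (fun s => (γBw - γ) * X s)
        = (fun s => (γBw - γ) * ((polMatrix P πstar).mulVec V1) s)
          + γBw • (polMatrix P πstar).mulVec (fun s => (γBw - γ) * X s) := by
      funext s
      have e1 : (polMatrix P πstar).mulVec (fun t => (γBw - γ) * X t) s
          = (γBw - γ) * ((polMatrix P πstar).mulVec X) s := by
        have h : (fun t => (γBw - γ) * X t) = (γBw - γ) • X := rfl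
        rw [h, Matrix.mulVec_smul]; rfl
      have e2 : X s = ((polMatrix P πstar).mulVec V1) s
          + γBw * ((polMatrix P πstar).mulVec X) s := congrFun hX s
      show (γBw - γ) * X s = (γBw - γ) * ((polMatrix P πstar).mulVec V1) s
        + γBw * ((polMatrix P πstar).mulVec (fun s => (γBw - γ) * X s)) s
      rw [e1, e2]
      ring
    exact VarBoundAux.fixed_unique _ h10 h11 hγB0 hγBw1 hfix1 hfix2
  have hE2 : (fun s => V2' s - V2 s) = fun s => (γBw - γ) * Y2 s := by
    have hfix1 : (fun s => V2' s - V2 s)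
        = (fun s => (γBw - γ) * ((polMatrix P πhat).mulVec V2) s)
          + γBw • (polMatrix P πhat).mulVec (fun s => V2' s - V2 s) := by
      funext s
      have e1 : (polMatrix P πhat).mulVec (fun t => V2' t - V2 t) s
          = (polMatrix P πhat).mulVec V2' s - (polMatrix P πhat).mulVec V2 s := by
        have h : (fun t => V2' t - V2 t) = V2' - V2 := rfl
        rw [h, Matrix.mulVec_sub]; rfl
      have e2 : V2' s = polReward R πhat s + γBw * ((polMatrix P πhat).mulVec V2') s :=
        congrFun hB2' s
      have e3 : V2 s = polReward R πhat s + γ * ((polMatrix P πhat).mulVec V2) s :=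
        congrFun hB2 s
      show V2' s - V2 s = (γBw - γ) * ((polMatrix P πhat).mulVec V2) s
        + γBw * ((polMatrix P πhat).mulVec (fun s => V2' s - V2 s)) s
      rw [e1]
      nth_rewrite 1 [e2]
      nth_rewrite 1 [e3]
      ring
    have hfix2 : (fun s => (γBw - γ) * Y2 s)
        = (fun s => (γBw - γ) * ((polMatrix P πhat).mulVec V2) s)
          + γBw • (polMatrix P πhat).mulVec (fun s => (γBw - γ) * Y2 s) := by
      funext s
      have e1 : (polMatrix P πhat).mulVec (fun t => (γBw - γ) * Y2 t) s
          = (γBw - γ) * ((polMatrix P πhat).mulVec Y2) s := by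
        have h : (fun t => (γBw - γ) * Y2 t) = (γBw - γ) • Y2 := rfl
        rw [h, Matrix.mulVec_smul]; rfl
      have e2 : Y2 s = ((polMatrix P πhat).mulVec V2) s
          + γBw * ((polMatrix P πhat).mulVec Y2) s := congrFun hY2 s
      show (γBw - γ) * Y2 s = (γBw - γ) * ((polMatrix P πhat).mulVec V2) s
        + γBw * ((polMatrix P πhat).mulVec (fun s => (γBw - γ) * Y2 s)) s
      rw [e1, e2]
      ring
    exact VarBoundAux.fixed_unique _ h20 h21 hγB0 hγBw1 hfix1 hfix2
  -- G bound
  have hGfix : (fun s => Y s - Y2 s)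
      = (polMatrix P πhat).mulVec (fun t => V1 t - V2 t)
        + γBw • (polMatrix P πhat).mulVec (fun s => Y s - Y2 s) := by
    funext s
    have e1 : (polMatrix P πhat).mulVec (fun t => Y t - Y2 t) s
        = (polMatrix P πhat).mulVec Y s - (polMatrix P πhat).mulVec Y2 s := by
      have h : (fun t => Y t - Y2 t) = Y - Y2 := rfl
      rw [h, Matrix.mulVec_sub]; rfl
    have e2 : (polMatrix P πhat).mulVec (fun t => V1 t - V2 t) s
        = (polMatrix P πhat).mulVec V1 s - (polMatrix P πhat).mulVec V2 s := by
      have h : (fun t => V1 t - V2 t) = V1 - V2 := rfl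
      rw [h, Matrix.mulVec_sub]; rfl
    have e3 : Y s = ((polMatrix P πhat).mulVec V1) s
        + γBw * ((polMatrix P πhat).mulVec Y) s := congrFun hY s
    have e4 : Y2 s = ((polMatrix P πhat).mulVec V2) s
        + γBw * ((polMatrix P πhat).mulVec Y2) s := congrFun hY2 s
    show Y s - Y2 s = (polMatrix P πhat).mulVec (fun t => V1 t - V2 t) s
      + γBw * ((polMatrix P πhat).mulVec (fun s => Y s - Y2 s)) s
    rw [e1, e2, e3, e4]
    ring
  have hGbound : supNorm (fun s => Y s - Y2 s) ≤ ε / (1 - γBw) := by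
    have h := VarBoundAux.fixed_norm_le _ h20 h21 hγB0 hγBw1 hGfix
    refine le_trans h ?_
    refine (div_le_div_iff_of_pos_right hd1).mpr ?_
    rw [hεdef]
    exact VarBoundAux.supNorm_le fun s => VarBoundAux.abs_mulVec_le _ h20 h21 _ s
  -- C1 : pair bound on X, Y
  set cp := (Finset.univ : Finset (S × S)).sup' Finset.univ_nonempty
      (fun pr => |X pr.1 - Y pr.2|) with hcpdef
  have hcp_ge : ∀ u w, |X u - Y w| ≤ cp := fun u w => by
    rw [hcpdef]
    exact Finset.le_sup' (f := fun pr : S × S => |X pr.1 - Y pr.2|) (Finset.mem_univ (u, w))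
  have hcp0 : 0 ≤ cp :=
    le_trans (abs_nonneg _) (hcp_ge (Classical.arbitrary S) (Classical.arbitrary S))
  have hstep : ∀ u w, |X u - Y w| ≤ κ + γBw * cp := by
    intro u w
    have eX : X u = ∑ z, polMatrix P πstar u z * V1 z
        + γBw * ∑ z, polMatrix P πstar u z * X z := by
      have h : X u = ((polMatrix P πstar).mulVec V1) u
          + γBw * ((polMatrix P πstar).mulVec X) u := congrFun hX u
      rw [VarBoundAux.mulVec_apply, VarBoundAux.mulVec_apply] at h
      exact h
    have eY : Y w = ∑ z, polMatrix P πhat w z * V1 z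
        + γBw * ∑ z, polMatrix P πhat w z * Y z := by
      have h : Y w = ((polMatrix P πhat).mulVec V1) w
          + γBw * ((polMatrix P πhat).mulVec Y) w := congrFun hY w
      rw [VarBoundAux.mulVec_apply, VarBoundAux.mulVec_apply] at h
      exact h
    have b1 : ∑ z, polMatrix P πstar u z * V1 z - ∑ z, polMatrix P πhat w z * V1 z ≤ κ := by
      have := VarBoundAux.dot_sub_dot_le (fun z => polMatrix P πstar u z)
        (fun z => polMatrix P πhat w z) V1 V1 1 κ (fun z => h10 u z) (fun z => h20 w z)
        (h11 u) (h21 w) hκ0 hκpair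
      linarith
    have b1' : ∑ z, polMatrix P πhat w z * V1 z - ∑ z, polMatrix P πstar u z * V1 z ≤ κ := by
      have := VarBoundAux.dot_sub_dot_le (fun z => polMatrix P πhat w z)
        (fun z => polMatrix P πstar u z) V1 V1 1 κ (fun z => h20 w z) (fun z => h10 u z)
        (h21 w) (h11 u) hκ0 hκpair
      linarith
    have b2 : ∑ z, polMatrix P πstar u z * X z - ∑ z, polMatrix P πhat w z * Y z ≤ cp := by
      have := VarBoundAux.dot_sub_dot_le (fun z => polMatrix P πstar u z)
        (fun z => polMatrix P πhat w z) X Y 1 cp (fun z => h10 u z) (fun z => h20 w z)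
        (h11 u) (h21 w) hcp0 (fun z z' => le_trans (le_abs_self _) (hcp_ge z z'))
      linarith
    have b2' : ∑ z, polMatrix P πhat w z * Y z - ∑ z, polMatrix P πstar u z * X z ≤ cp := by
      have := VarBoundAux.dot_sub_dot_le (fun z => polMatrix P πhat w z)
        (fun z => polMatrix P πstar u z) Y X 1 cp (fun z => h20 w z) (fun z => h10 u z)
        (h21 w) (h11 u) hcp0 (fun z z' => by
          calc Y z - X z' ≤ |Y z - X z'| := le_abs_self _
            _ = |X z' - Y z| := abs_sub_comm _ _
            _ ≤ cp := hcp_ge z' z)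
      linarith
    rw [abs_sub_le_iff]
    constructor
    · rw [eX, eY]
      nlinarith [b1, b2, hγB0, mul_le_mul_of_nonneg_left b2 hγB0]
    · rw [eX, eY]
      nlinarith [b1', b2', hγB0, mul_le_mul_of_nonneg_left b2' hγB0]
  have hcp_le : cp ≤ κ + γBw * cp := by
    rw [hcpdef]
    exact Finset.sup'_le _ _ fun pr _ => hstep pr.1 pr.2
  have hcpb : cp ≤ κ / (1 - γBw) := by
    rw [le_div_iff₀ hd1]
    nlinarith
  -- D bound
  set nD := supNorm (fun s => X s - Y s) with hnDdef
  have hnD0 : 0 ≤ nD := by rw [hnDdef]; exact VarBoundAux.supNorm_nonneg _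
  have hnDle : nD ≤ κ / (1 - γBw) := by
    rw [hnDdef]
    exact VarBoundAux.supNorm_le fun s => le_trans (hcp_ge s s) hcpb
  have hcκ0 : 0 ≤ κ / (1 - γBw) := div_nonneg hκ0 hd1.le
  have hdx : ∀ s, (∑ z, |polMatrix P πstar s z - polMatrix P πhat s z|) / 2 ≤ x := by
    intro s
    by_cases hss : πstar s = πhat s
    · have hz : ∀ z, polMatrix P πstar s z - polMatrix P πhat s z = 0 := by
        intro z
        show P s (πstar s) z - P s (πhat s) z = 0
        rw [hss]; ring
      simp only [hz, abs_zero, Finset.sum_const_zero]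
      simpa using hx0
    · rw [hxdef]
      have h := VarBoundAux.le_discordantVar P πstar πhat s hss
      have e : (∑ z, |polMatrix P πstar s z - polMatrix P πhat s z|)
          = ∑ z, |P s (πstar s) z - P s (πhat s) z| := rfl
      rw [e]
      linarith
  have key : ∀ s, |X s - Y s|
      ≤ γBw * nD + x * (κ + γBw * (κ / (1 - γBw)) - γBw * nD) := by
    intro s
    have eX : X s = ∑ z, polMatrix P πstar s z * V1 z
        + γBw * ∑ z, polMatrix P πstar s z * X z := by
      have h : X s = ((polMatrix P πstar).mulVec V1) s
          + γBw * ((polMatrix P πstar).mulVec X) s := congrFun hX s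
      rw [VarBoundAux.mulVec_apply, VarBoundAux.mulVec_apply] at h
      exact h
    have eY : Y s = ∑ z, polMatrix P πhat s z * V1 z
        + γBw * ∑ z, polMatrix P πhat s z * Y z := by
      have h : Y s = ((polMatrix P πhat).mulVec V1) s
          + γBw * ((polMatrix P πhat).mulVec Y) s := congrFun hY s
      rw [VarBoundAux.mulVec_apply, VarBoundAux.mulVec_apply] at h
      exact h
    rw [eX, eY]
    refine VarBoundAux.key_step_abs γBw x κ (κ / (1 - γBw)) nD
      (fun z => polMatrix P πstar s z) (fun z => polMatrix P πhat s z) V1 X Y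
      hγB0 hx0 hκ0 hcκ0 hnD0 (fun z => h10 s z) (fun z => h20 s z) (h11 s) (h21 s)
      (hdx s) hκpair
      (fun z z' => le_trans (le_trans (le_abs_self _) (hcp_ge z z')) hcpb)
      (fun z z' => ?_) (fun z => ?_) (mul_le_mul_of_nonneg_left hnDle hγB0)
    · calc Y z - X z' ≤ |Y z - X z'| := le_abs_self _
        _ = |X z' - Y z| := abs_sub_comm _ _
        _ ≤ cp := hcp_ge z' z
        _ ≤ κ / (1 - γBw) := hcpb
    · rw [hnDdef]
      exact VarBoundAux.le_supNorm (fun s => X s - Y s) z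
  have hnDb : nD ≤ γBw * nD + x * (κ + γBw * (κ / (1 - γBw)) - γBw * nD) := by
    rw [hnDdef]
    exact VarBoundAux.supNorm_le key
  have hdenom2 : (0:ℝ) < 1 - γBw * (1 - x) := by nlinarith [mul_nonneg hγB0 hx0]
  have hq : κ / (1 - γBw) * (1 - γBw) = κ := div_mul_cancel₀ κ hd1.ne'
  have hne1 : (1 - γBw) ≠ 0 := hd1.ne'
  have hDfinal : nD ≤ x * κ / ((1 - γBw) * (1 - γBw * (1 - x))) := by
    rw [le_div_iff₀ (mul_pos hd1 hdenom2)]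
    have h5 : nD - γBw * nD + x * γBw * nD ≤ x * κ + x * γBw * (κ / (1 - γBw)) := by
      nlinarith [hnDb]
    have h6 := mul_le_mul_of_nonneg_right h5 hd1.le
    calc nD * ((1 - γBw) * (1 - γBw * (1 - x)))
        = (nD - γBw * nD + x * γBw * nD) * (1 - γBw) := by ring
      _ ≤ (x * κ + x * γBw * (κ / (1 - γBw))) * (1 - γBw) := h6
      _ = x * κ := by field_simp; ring
  -- final assembly
  have hfinal : ∀ s, V1' s - V2' s
      = (V1 s - V2 s) + (γBw - γ) * ((X s - Y s) + (Y s - Y2 s)) := by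
    intro s
    have e1 : V1' s - V1 s = (γBw - γ) * X s := congrFun hE1 s
    have e2 : V2' s - V2 s = (γBw - γ) * Y2 s := congrFun hE2 s
    nlinarith [e1, e2]
  have hbound : ∀ s, |V1' s - V2' s|
      ≤ ε + (γBw - γ) * (x * κ / ((1 - γBw) * (1 - γBw * (1 - x))) + ε / (1 - γBw)) := by
    intro s
    rw [hfinal s]
    have h1 : |V1 s - V2 s| ≤ ε := by
      rw [hεdef]; exact VarBoundAux.le_supNorm (fun s => V1 s - V2 s) s
    have h2 : |X s - Y s| ≤ x * κ / ((1 - γBw) * (1 - γBw * (1 - x))) := by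
      refine le_trans ?_ hDfinal
      rw [hnDdef]; exact VarBoundAux.le_supNorm (fun s => X s - Y s) s
    have h3 : |Y s - Y2 s| ≤ ε / (1 - γBw) :=
      le_trans (VarBoundAux.le_supNorm (fun s => Y s - Y2 s) s) hGbound
    calc |(V1 s - V2 s) + (γBw - γ) * ((X s - Y s) + (Y s - Y2 s))|
        ≤ |V1 s - V2 s| + (γBw - γ) * |(X s - Y s) + (Y s - Y2 s)| := by
          refine le_trans (abs_add_le _ _) ?_
          rw [abs_mul, abs_of_nonneg (by linarith : (0:ℝ) ≤ γBw - γ)]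
      _ ≤ ε + (γBw - γ) * (x * κ / ((1 - γBw) * (1 - γBw * (1 - x))) + ε / (1 - γBw)) := by
          refine add_le_add h1 (mul_le_mul_of_nonneg_left ?_ (by linarith))
          exact le_trans (abs_add_le _ _) (add_le_add h2 h3)
  refine le_trans (VarBoundAux.supNorm_le hbound) (le_of_eq ?_)
  have hne2 : (1 - γBw * (1 - x)) ≠ 0 := hdenom2.ne'
  field_simp
  ring
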